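/- Let A : [0,∞) → ℝ be a C¹ function, let ε, C₀, C₁ > 0, and let m₀ > 0. Suppose: (a) A(t) > e^{−C₀}·m₀/(2C₁) for all t ∈ [0, ε]; (b) ε·A'(t) ≥ −C₀·A(t) for all t ≥ 0; and (c) for every t₁ ≥ ε, if sup_{t ∈ [t₁−ε, t₁]} A(t) ≤ m₀/(2C₁) then ε·A'(t₁) ≥ (m₀/2)·A(t₁). If moreover A(t) > 0 for all t, then A(t) > e^{−C₀}·m₀/(2C₁) for all t ≥ 0. -/

import Mathlib

open Set Filter Topology

/-- Barrier/continuation argument: if `A > e^{-C₀} m₀/(2C₁)` on `[0,ε]`,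
`ε A' ≥ -C₀ A`, and whenever `A ≤ m₀/(2C₁)` on `[t₁-ε,t₁]` one has
`ε A'(t₁) ≥ (m₀/2) A(t₁)`, then `A > e^{-C₀} m₀/(2C₁)` for all `t ≥ 0`. -/
theorem stmt_3 (A : ℝ → ℝ) (ε C₀ C₁ m₀ : ℝ)
    (hε : 0 < ε) (hC₀ : 0 < C₀) (hC₁ : 0 < C₁) (hm₀ : 0 < m₀)
    (hdiff : ∀ t ≥ (0:ℝ), DifferentiableAt ℝ A t)
    (ha : ∀ t ∈ Icc (0:ℝ) ε, Real.exp (-C₀) * m₀ / (2 * C₁) < A t)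
    (hb : ∀ t ≥ (0:ℝ), ε * deriv A t ≥ -C₀ * A t)
    (hc : ∀ t₁ ≥ ε, (∀ t ∈ Icc (t₁ - ε) t₁, A t ≤ m₀ / (2 * C₁)) →
      ε * deriv A t₁ ≥ (m₀ / 2) * A t₁)
    (hpos : ∀ t ≥ (0:ℝ), 0 < A t) :
    ∀ t ≥ (0:ℝ), Real.exp (-C₀) * m₀ / (2 * C₁) < A t := by
  set b := Real.exp (-C₀) * m₀ / (2 * C₁) with hb_def
  by_contra hcon
  push_neg at hcon
  obtain ⟨t₀, ht₀, hAt₀⟩ := hcon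
  set S : Set ℝ := {t | 0 ≤ t ∧ A t ≤ b} with hS_def
  have hSne : S.Nonempty := ⟨t₀, ht₀, hAt₀⟩
  have hSbdd : BddBelow S := ⟨0, fun s hs => hs.1⟩
  set T := sInf S with hT_def
  have hT0 : 0 ≤ T := le_csInf hSne fun s hs => hs.1
  have hcont : ∀ t ≥ (0:ℝ), ContinuousAt A t := fun t ht => (hdiff t ht).continuousAt
  -- A T ≤ b
  have hAT : A T ≤ b := by
    by_contra h
    push_neg at h
    have hev : ∀ᶠ t in 𝓝 T, b < A t :=
      (hcont T hT0).eventually (eventually_gt_nhds h)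
    rw [Metric.eventually_nhds_iff] at hev
    obtain ⟨δ, hδ, hδ'⟩ := hev
    obtain ⟨s, hsS, hslt⟩ := Real.lt_sInf_add_pos hSne hδ
    have hsT : T ≤ s := csInf_le hSbdd hsS
    have : dist s T < δ := by
      rw [Real.dist_eq, abs_of_nonneg (by linarith)]
      linarith
    exact absurd (hδ' this) (not_lt.mpr hsS.2)
  -- T > ε
  have hTε : ε < T := by
    by_contra h
    push_neg at h
    exact absurd hAT (not_le.mpr (ha T ⟨hT0, h⟩))
  -- A t > b for 0 ≤ t < T
  have hlt : ∀ t, 0 ≤ t → t < T → b < A t := by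
    intro t ht htT
    by_contra h
    push_neg at h
    exact absurd (csInf_le hSbdd ⟨ht, h⟩) (not_le.mpr htT)
  -- Gronwall: g t = A t * exp (c t) is monotone on [0, ∞)
  set c := C₀ / ε with hc_def
  have hcpos : 0 < c := div_pos hC₀ hε
  set g : ℝ → ℝ := fun t => A t * Real.exp (c * t) with hg_def
  have hgderiv : ∀ t, 0 ≤ t → HasDerivAt g
      (deriv A t * Real.exp (c * t) + A t * (Real.exp (c * t) * c)) t := by
    intro t ht
    have hE : HasDerivAt (fun t => Real.exp (c * t)) (Real.exp (c * t) * c) t := by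
      simpa using (((hasDerivAt_id t).const_mul c).exp)
    exact ((hdiff t ht).hasDerivAt).mul hE
  have hgmono : MonotoneOn g (Ici 0) := by
    apply monotoneOn_of_deriv_nonneg (convex_Ici 0)
    · intro t ht
      exact ((hcont t ht).mul (Real.continuous_exp.comp (continuous_const_smul c)).continuousAt).continuousWithinAt
    · intro t ht
      rw [interior_Ici] at ht
      exact (hgderiv t (le_of_lt ht)).differentiableAt.differentiableWithinAt
    · intro t ht
      rw [interior_Ici] at ht
      rw [(hgderiv t (le_of_lt ht)).deriv]
      have h1 : ε * deriv A t ≥ -C₀ * A t := hb t (le_of_lt ht)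
      have hE : 0 < Real.exp (c * t) := Real.exp_pos _
      have hεc : ε * c = C₀ := by rw [hc_def]; field_simp
      have hsub : ε * c * A t = C₀ * A t := by rw [hεc]
      have h2 : deriv A t + c * A t ≥ 0 := by
        by_contra hneg
        push_neg at hneg
        have hprod : 0 < ε * (-(deriv A t + c * A t)) := mul_pos hε (by linarith)
        nlinarith [hprod, h1, hsub]
      nlinarith
  -- bound on [T - ε, T]
  have hATpos : 0 < A T := hpos T hT0
  have hbound : ∀ t ∈ Icc (T - ε) T, A t ≤ m₀ / (2 * C₁) := by
    intro t ht
    have ht0 : 0 ≤ t := le_trans (by linarith [ht.1]) ht.1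
    have hg : g t ≤ g T := hgmono (mem_Ici.mpr ht0) (mem_Ici.mpr hT0) ht.2
    have hE : 0 < Real.exp (c * t) := Real.exp_pos _
    have h1 : A t ≤ A T * Real.exp (c * (T - t)) := by
      have h2 : A T * Real.exp (c * (T - t)) * Real.exp (c * t) = A T * Real.exp (c * T) := by
        rw [mul_assoc, ← Real.exp_add]
        ring_nf
      refine le_of_mul_le_mul_right ?_ hE
      rw [h2]
      exact hg
    have h3 : Real.exp (c * (T - t)) ≤ Real.exp C₀ := by
      apply Real.exp_le_exp.mpr
      have : T - t ≤ ε := by linarith [ht.1]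
      calc c * (T - t) ≤ c * ε := by
            apply mul_le_mul_of_nonneg_left this (le_of_lt hcpos)
        _ = C₀ := by rw [hc_def]; field_simp
    have h4 : A T * Real.exp (c * (T - t)) ≤ A T * Real.exp C₀ :=
      mul_le_mul_of_nonneg_left h3 (le_of_lt hATpos)
    have h5 : A T * Real.exp C₀ ≤ b * Real.exp C₀ :=
      mul_le_mul_of_nonneg_right hAT (le_of_lt (Real.exp_pos _))
    have h6 : b * Real.exp C₀ = m₀ / (2 * C₁) := by
      rw [hb_def, Real.exp_neg]
      field_simp
    linarith
  -- derivative at T is positive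
  have hderT : ε * deriv A T ≥ (m₀ / 2) * A T := hc T (le_of_lt hTε) hbound
  -- left slope nonpositive
  have hslope : Tendsto (slope A T) (𝓝[<] T) (𝓝 (deriv A T)) := by
    have := hasDerivAt_iff_tendsto_slope.mp (hdiff T hT0).hasDerivAt
    exact this.mono_left (nhdsWithin_mono T (fun y hy => ne_of_lt hy))
  have hder_le : deriv A T ≤ 0 := by
    refine le_of_tendsto hslope ?_
    filter_upwards [Ioo_mem_nhdsLT (show (0:ℝ) < T by linarith)] with t ht
    have hbt : b < A t := hlt t (le_of_lt ht.1) ht.2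
    have hnum : 0 ≤ A t - A T := by linarith
    have hden : t - T < 0 := by linarith [ht.2]
    rw [slope_def_field]
    show (A t - A T) / (t - T) ≤ 0
    exact div_nonpos_iff.mpr (Or.inl ⟨hnum, le_of_lt hden⟩)
  nlinarith
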